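/- arXiv:1207.5219 — 6 statements merged into one kernel-verified Lean document; each statement's English description precedes it below -/
import Mathlib

section
/- For every real r > 0, S(r) > 1/(r² + 1/2), where S(r) = Σ_{n≥1} 2n/(n²+r²)². -/
open Filter Topology

noncomputable def S (r : ℝ) : ℝ :=
  ∑' n : ℕ, (2 * ((n : ℝ) + 1)) / ((((n : ℝ) + 1) ^ 2 + r ^ 2) ^ 2)

theorem stmt_4 (r : ℝ) (hr : 0 < r) : S r > 1 / (r ^ 2 + 1 / 2) := by
  set f : ℕ → ℝ := fun n => (2 * ((n : ℝ) + 1)) / ((((n : ℝ) + 1) ^ 2 + r ^ 2) ^ 2) with hf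
  set d : ℕ → ℝ := fun n => 1 / (((n : ℝ) + 1) ^ 2 - ((n : ℝ) + 1) + 1 / 2 + r ^ 2) with hd
  have hbpos : ∀ n : ℕ, (0:ℝ) < ((n : ℝ) + 1) ^ 2 - ((n : ℝ) + 1) + 1 / 2 + r ^ 2 := by
    intro n
    nlinarith [sq_nonneg ((n:ℝ) + 1/2), sq_nonneg r, hr]
  have hx : ∀ n : ℕ, (1:ℝ) ≤ (n:ℝ) + 1 := fun n => by
    have := Nat.cast_nonneg (α := ℝ) n; linarith
  -- g n := d n - d (n+1), nonneg
  set g : ℕ → ℝ := fun n => d n - d (n+1) with hg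
  have hgnonneg : ∀ n : ℕ, 0 ≤ g n := by
    intro n
    have h1 := hbpos n
    have h2 := hbpos (n+1)
    simp only [hg, hd]
    rw [sub_nonneg]
    apply one_div_le_one_div_of_le h1
    push_cast
    nlinarith [hx n]
  -- termwise: g n < f n
  have hlt : ∀ n : ℕ, g n < f n := by
    intro n
    have h1 := hbpos n
    have h2 := hbpos (n+1)
    have hxp : (0:ℝ) < (n:ℝ) + 1 := by positivity
    have hC : (0:ℝ) < (((n:ℝ)+1)^2 + r^2)^2 := by positivity
    simp only [hg, hd, hf]
    rw [div_sub_div _ _ (ne_of_gt h1) (ne_of_gt h2), div_lt_div_iff₀ (by positivity) hC]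
    push_cast
    nlinarith [sq_nonneg r, mul_pos hxp hC, mul_pos hr hr]
  -- f summable
  have hfs : Summable f := by
    have h3 : Summable (fun n : ℕ => 2 * (1 / ((n:ℝ)+1)^3)) := by
      have := (Real.summable_one_div_nat_pow.mpr (show 1 < 3 by norm_num)).mul_left 2
      have h4 := (summable_nat_add_iff 1).mpr this
      convert h4 using 2 with n
      · rfl
      push_cast
      ring
    apply Summable.of_nonneg_of_le (fun n => by positivity) _ h3
    intro n
    have hxp : (0:ℝ) < (n:ℝ) + 1 := by positivity
    show 2 * ((n:ℝ) + 1) / (((n:ℝ) + 1) ^ 2 + r ^ 2) ^ 2 ≤ 2 * (1 / ((n:ℝ)+1)^3)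
    rw [mul_one_div, div_le_div_iff₀ (by positivity) (by positivity)]
    nlinarith [sq_nonneg r, pow_pos hxp 3, sq_nonneg (r^2)]
  -- telescoping sum
  have hdtend : Tendsto d atTop (𝓝 0) := by
    have hden : Tendsto (fun n : ℕ => ((n : ℝ) + 1) ^ 2 - ((n : ℝ) + 1) + 1 / 2 + r ^ 2) atTop atTop := by
      apply tendsto_atTop_mono (fun n => ?_) tendsto_natCast_atTop_atTop
      have h := Nat.cast_nonneg (α := ℝ) n
      nlinarith [sq_nonneg r]
    simpa [hd, one_div, Pi.inv_def] using hden.inv_tendsto_atTop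
  have hgsum : HasSum g (1 / (r ^ 2 + 1 / 2)) := by
    rw [hasSum_iff_tendsto_nat_of_nonneg hgnonneg]
    have : ∀ n, ∑ i ∈ Finset.range n, g i = d 0 - d n := fun n => Finset.sum_range_sub' d n
    simp only [this]
    have hd0 : d 0 = 1 / (r ^ 2 + 1 / 2) := by
      simp only [hd]
      norm_num
      ring_nf
    rw [← hd0]
    simpa using (tendsto_const_nhds (x := d 0)).sub hdtend
  have key : ∑' n, g n < ∑' n, f n :=
    Summable.tsum_lt_tsum_of_nonneg hgnonneg (fun n => (hlt n).le) (hlt 0) hfs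
  have : S r = ∑' n, f n := rfl
  rw [gt_iff_lt, this, ← hgsum.tsum_eq]
  exact key
end

section
/- For every real r > 0, S(r) < 1/r² - 1/(6r⁴) - 1/(30r⁶) + 3/(50r⁸), where S(r) = Σ_{n≥1} 2n/(n²+r²)². -/
open Filter Topology

set_option maxHeartbeats 4000000
set_option maxRecDepth 100000

/-- Euler–Maclaurin style majorant for the tail of the Mathieu series. -/
noncomputable def W (t x : ℝ) : ℝ :=
  ((13/60 : ℝ)*x^6 - (1/6 : ℝ)*x^8 + (1/2 : ℝ)*x^10 + x^11 + x^12 - (41/60 : ℝ)*x^4*t + (11/6 : ℝ)*x^8*t + 5*x^9*t + 6*x^10*t + (13/20 : ℝ)*x^2*t^2 + (7/15 : ℝ)*x^4*t^2 + (7/3 : ℝ)*x^6*t^2 + 10*x^7*t^2 + 15*x^8*t^2 + (11/420 : ℝ)*t^3 + (4/15 : ℝ)*x^2*t^3 + x^4*t^3 + 10*x^5*t^3 + 20*x^6*t^3 - (1/30 : ℝ)*t^4 - (1/6 : ℝ)*x^2*t^4 + 5*x^3*t^4 + 15*x^4*t^4 - (1/6 : ℝ)*t^5 + x*t^5 + 6*x^2*t^5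 + t^6) / (x^2 + t)^7

lemma keypoly (x t : ℝ) (hx : 1 ≤ x) (ht0 : 0 ≤ t) :
    (0:ℝ) ≤ (13/60 : ℝ)*x^6 + (91/30 : ℝ)*x^7 + (391/20 : ℝ)*x^8 + (1148/15 : ℝ)*x^9 + (12133/60 : ℝ)*x^10 + (3791/10 : ℝ)*x^11 + (30979/60 : ℝ)*x^12 + (7724/15 : ℝ)*x^13 + (3751/10 : ℝ)*x^14 + (989/5 : ℝ)*x^15 + (374/5 : ℝ)*x^16 + (101/5 : ℝ)*x^17 + (19/5 : ℝ)*x^18 + (2/5 : ℝ)*x^19 - (41/60 : ℝ)*x^4*t - (287/30 : ℝ)*x^5*t - (182/3 : ℝ)*x^6*t - (3458/15 : ℝ)*x^7*t - (2333/4 : ℝ)*x^8*t - (10277/10 : ℝ)*x^9*t - (38159/30 : ℝ)*x^10*t - (3208/3 : ℝ)*x^11*t - (3185/6 : ℝ)*x^12*t - (679/15 : ℝ)*x^13*t + 138*x^14*t + 100*x^15*t + (153/5 : ℝ)*x^16*t + (18/5 : ℝ)*x^17*t + (13/20 : ℝ)*x^2*t^2 + (91/10 : ℝ)*x^3*t^2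 + (329/6 : ℝ)*x^4*t^2 + (2786/15 : ℝ)*x^5*t^2 + (3843/10 : ℝ)*x^6*t^2 + 487*x^7*t^2 + (1411/4 : ℝ)*x^8*t^2 + 156*x^9*t^2 + (1309/6 : ℝ)*x^10*t^2 + (7147/15 : ℝ)*x^11*t^2 + 546*x^12*t^2 + 336*x^13*t^2 + 108*x^14*t^2 + (72/5 : ℝ)*x^15*t^2 + (11/420 : ℝ)*t^3 + (11/30 : ℝ)*x*t^3 + (36/5 : ℝ)*x^2*t^3 + (1018/15 : ℝ)*x^3*t^3 + (3407/10 : ℝ)*x^4*t^3 + (5251/5 : ℝ)*x^5*t^3 + (10813/5 : ℝ)*x^6*t^3 + (110064/35 : ℝ)*x^7*t^3 + (33669/10 : ℝ)*x^8*t^3 + (40901/15 : ℝ)*x^9*t^3 + (8338/5 : ℝ)*x^10*t^3 + 740*x^11*t^3 + (1092/5 : ℝ)*x^12*t^3 + (168/5 : ℝ)*x^13*t^3 + (3/20 : ℝ)*t^4 + (26/15 : ℝ)*x*t^4 + (293/12 : ℝ)*x^2*t^4 + (5393/30 : ℝ)*x^3*t^4 + (14351/20 : ℝ)*x^4*t^4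 + (26132/15 : ℝ)*x^5*t^4 + (82159/30 : ℝ)*x^6*t^4 + (8561/3 : ℝ)*x^7*t^4 + (9846/5 : ℝ)*x^8*t^4 + (4498/5 : ℝ)*x^9*t^4 + (1386/5 : ℝ)*x^10*t^4 + (252/5 : ℝ)*x^11*t^4 + (3/20 : ℝ)*t^5 - (19/30 : ℝ)*x*t^5 + (401/30 : ℝ)*x^2*t^5 + 136*x^3*t^5 + (14161/30 : ℝ)*x^4*t^5 + (2527/3 : ℝ)*x^5*t^5 + (4326/5 : ℝ)*x^6*t^5 + (2748/5 : ℝ)*x^7*t^5 + (1134/5 : ℝ)*x^8*t^5 + (252/5 : ℝ)*x^9*t^5 + (1/20 : ℝ)*t^6 - (20/3 : ℝ)*x*t^6 - (231/10 : ℝ)*x^2*t^6 - (119/15 : ℝ)*x^3*t^6 + 70*x^4*t^6 + (728/5 : ℝ)*x^5*t^6 + (588/5 : ℝ)*x^6*t^6 + (168/5 : ℝ)*x^7*t^6 + (7/10 : ℝ)*t^7 - (19/5 : ℝ)*x*t^7 - (42/5 : ℝ)*x^2*t^7 + (92/5 : ℝ)*x^3*t^7 + 36*x^4*t^7 + (72/5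 : ℝ)*x^5*t^7 + (12/5 : ℝ)*t^8 + (33/5 : ℝ)*x*t^8 + (27/5 : ℝ)*x^2*t^8 + (18/5 : ℝ)*x^3*t^8 + (1/5 : ℝ)*t^9 + (2/5 : ℝ)*x*t^9 := by
  have hu : (0:ℝ) ≤ x - 1 := by linarith
  have ht : (0:ℝ) ≤ t := ht0
  have m0_3 : (0:ℝ) ≤ (x-1)^0 * t^3 := mul_nonneg (pow_nonneg hu 0) (pow_nonneg ht 3)
  have m0_4 : (0:ℝ) ≤ (x-1)^0 * t^4 := mul_nonneg (pow_nonneg hu 0) (pow_nonneg ht 4)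
  have m0_5 : (0:ℝ) ≤ (x-1)^0 * t^5 := mul_nonneg (pow_nonneg hu 0) (pow_nonneg ht 5)
  have m0_6 : (0:ℝ) ≤ (x-1)^0 * t^6 := mul_nonneg (pow_nonneg hu 0) (pow_nonneg ht 6)
  have m0_7 : (0:ℝ) ≤ (x-1)^0 * t^7 := mul_nonneg (pow_nonneg hu 0) (pow_nonneg ht 7)
  have m0_8 : (0:ℝ) ≤ (x-1)^0 * t^8 := mul_nonneg (pow_nonneg hu 0) (pow_nonneg ht 8)
  have m0_9 : (0:ℝ) ≤ (x-1)^0 * t^9 := mul_nonneg (pow_nonneg hu 0) (pow_nonneg ht 9)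
  have m1_3 : (0:ℝ) ≤ (x-1)^1 * t^3 := mul_nonneg (pow_nonneg hu 1) (pow_nonneg ht 3)
  have m1_4 : (0:ℝ) ≤ (x-1)^1 * t^4 := mul_nonneg (pow_nonneg hu 1) (pow_nonneg ht 4)
  have m1_5 : (0:ℝ) ≤ (x-1)^1 * t^5 := mul_nonneg (pow_nonneg hu 1) (pow_nonneg ht 5)
  have m1_6 : (0:ℝ) ≤ (x-1)^1 * t^6 := mul_nonneg (pow_nonneg hu 1) (pow_nonneg ht 6)
  have m1_7 : (0:ℝ) ≤ (x-1)^1 * t^7 := mul_nonneg (pow_nonneg hu 1) (pow_nonneg ht 7)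
  have m1_8 : (0:ℝ) ≤ (x-1)^1 * t^8 := mul_nonneg (pow_nonneg hu 1) (pow_nonneg ht 8)
  have m1_9 : (0:ℝ) ≤ (x-1)^1 * t^9 := mul_nonneg (pow_nonneg hu 1) (pow_nonneg ht 9)
  have m2_3 : (0:ℝ) ≤ (x-1)^2 * t^3 := mul_nonneg (pow_nonneg hu 2) (pow_nonneg ht 3)
  have m2_4 : (0:ℝ) ≤ (x-1)^2 * t^4 := mul_nonneg (pow_nonneg hu 2) (pow_nonneg ht 4)
  have m2_5 : (0:ℝ) ≤ (x-1)^2 * t^5 := mul_nonneg (pow_nonneg hu 2) (pow_nonneg ht 5)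
  have m2_6 : (0:ℝ) ≤ (x-1)^2 * t^6 := mul_nonneg (pow_nonneg hu 2) (pow_nonneg ht 6)
  have m2_7 : (0:ℝ) ≤ (x-1)^2 * t^7 := mul_nonneg (pow_nonneg hu 2) (pow_nonneg ht 7)
  have m2_8 : (0:ℝ) ≤ (x-1)^2 * t^8 := mul_nonneg (pow_nonneg hu 2) (pow_nonneg ht 8)
  have m3_3 : (0:ℝ) ≤ (x-1)^3 * t^3 := mul_nonneg (pow_nonneg hu 3) (pow_nonneg ht 3)
  have m3_4 : (0:ℝ) ≤ (x-1)^3 * t^4 := mul_nonneg (pow_nonneg hu 3) (pow_nonneg ht 4)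
  have m3_5 : (0:ℝ) ≤ (x-1)^3 * t^5 := mul_nonneg (pow_nonneg hu 3) (pow_nonneg ht 5)
  have m3_6 : (0:ℝ) ≤ (x-1)^3 * t^6 := mul_nonneg (pow_nonneg hu 3) (pow_nonneg ht 6)
  have m3_7 : (0:ℝ) ≤ (x-1)^3 * t^7 := mul_nonneg (pow_nonneg hu 3) (pow_nonneg ht 7)
  have m3_8 : (0:ℝ) ≤ (x-1)^3 * t^8 := mul_nonneg (pow_nonneg hu 3) (pow_nonneg ht 8)
  have m4_3 : (0:ℝ) ≤ (x-1)^4 * t^3 := mul_nonneg (pow_nonneg hu 4) (pow_nonneg ht 3)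
  have m4_4 : (0:ℝ) ≤ (x-1)^4 * t^4 := mul_nonneg (pow_nonneg hu 4) (pow_nonneg ht 4)
  have m4_5 : (0:ℝ) ≤ (x-1)^4 * t^5 := mul_nonneg (pow_nonneg hu 4) (pow_nonneg ht 5)
  have m4_6 : (0:ℝ) ≤ (x-1)^4 * t^6 := mul_nonneg (pow_nonneg hu 4) (pow_nonneg ht 6)
  have m4_7 : (0:ℝ) ≤ (x-1)^4 * t^7 := mul_nonneg (pow_nonneg hu 4) (pow_nonneg ht 7)
  have m5_3 : (0:ℝ) ≤ (x-1)^5 * t^3 := mul_nonneg (pow_nonneg hu 5) (pow_nonneg ht 3)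
  have m5_4 : (0:ℝ) ≤ (x-1)^5 * t^4 := mul_nonneg (pow_nonneg hu 5) (pow_nonneg ht 4)
  have m5_5 : (0:ℝ) ≤ (x-1)^5 * t^5 := mul_nonneg (pow_nonneg hu 5) (pow_nonneg ht 5)
  have m5_6 : (0:ℝ) ≤ (x-1)^5 * t^6 := mul_nonneg (pow_nonneg hu 5) (pow_nonneg ht 6)
  have m5_7 : (0:ℝ) ≤ (x-1)^5 * t^7 := mul_nonneg (pow_nonneg hu 5) (pow_nonneg ht 7)
  have m6_3 : (0:ℝ) ≤ (x-1)^6 * t^3 := mul_nonneg (pow_nonneg hu 6) (pow_nonneg ht 3)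
  have m6_4 : (0:ℝ) ≤ (x-1)^6 * t^4 := mul_nonneg (pow_nonneg hu 6) (pow_nonneg ht 4)
  have m6_5 : (0:ℝ) ≤ (x-1)^6 * t^5 := mul_nonneg (pow_nonneg hu 6) (pow_nonneg ht 5)
  have m6_6 : (0:ℝ) ≤ (x-1)^6 * t^6 := mul_nonneg (pow_nonneg hu 6) (pow_nonneg ht 6)
  have m7_0 : (0:ℝ) ≤ (x-1)^7 * t^0 := mul_nonneg (pow_nonneg hu 7) (pow_nonneg ht 0)
  have m7_1 : (0:ℝ) ≤ (x-1)^7 * t^1 := mul_nonneg (pow_nonneg hu 7) (pow_nonneg ht 1)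
  have m7_2 : (0:ℝ) ≤ (x-1)^7 * t^2 := mul_nonneg (pow_nonneg hu 7) (pow_nonneg ht 2)
  have m7_3 : (0:ℝ) ≤ (x-1)^7 * t^3 := mul_nonneg (pow_nonneg hu 7) (pow_nonneg ht 3)
  have m7_4 : (0:ℝ) ≤ (x-1)^7 * t^4 := mul_nonneg (pow_nonneg hu 7) (pow_nonneg ht 4)
  have m7_5 : (0:ℝ) ≤ (x-1)^7 * t^5 := mul_nonneg (pow_nonneg hu 7) (pow_nonneg ht 5)
  have m7_6 : (0:ℝ) ≤ (x-1)^7 * t^6 := mul_nonneg (pow_nonneg hu 7) (pow_nonneg ht 6)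
  have m8_0 : (0:ℝ) ≤ (x-1)^8 * t^0 := mul_nonneg (pow_nonneg hu 8) (pow_nonneg ht 0)
  have m8_1 : (0:ℝ) ≤ (x-1)^8 * t^1 := mul_nonneg (pow_nonneg hu 8) (pow_nonneg ht 1)
  have m8_2 : (0:ℝ) ≤ (x-1)^8 * t^2 := mul_nonneg (pow_nonneg hu 8) (pow_nonneg ht 2)
  have m8_3 : (0:ℝ) ≤ (x-1)^8 * t^3 := mul_nonneg (pow_nonneg hu 8) (pow_nonneg ht 3)
  have m8_4 : (0:ℝ) ≤ (x-1)^8 * t^4 := mul_nonneg (pow_nonneg hu 8) (pow_nonneg ht 4)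
  have m8_5 : (0:ℝ) ≤ (x-1)^8 * t^5 := mul_nonneg (pow_nonneg hu 8) (pow_nonneg ht 5)
  have m9_0 : (0:ℝ) ≤ (x-1)^9 * t^0 := mul_nonneg (pow_nonneg hu 9) (pow_nonneg ht 0)
  have m9_1 : (0:ℝ) ≤ (x-1)^9 * t^1 := mul_nonneg (pow_nonneg hu 9) (pow_nonneg ht 1)
  have m9_2 : (0:ℝ) ≤ (x-1)^9 * t^2 := mul_nonneg (pow_nonneg hu 9) (pow_nonneg ht 2)
  have m9_3 : (0:ℝ) ≤ (x-1)^9 * t^3 := mul_nonneg (pow_nonneg hu 9) (pow_nonneg ht 3)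
  have m9_4 : (0:ℝ) ≤ (x-1)^9 * t^4 := mul_nonneg (pow_nonneg hu 9) (pow_nonneg ht 4)
  have m9_5 : (0:ℝ) ≤ (x-1)^9 * t^5 := mul_nonneg (pow_nonneg hu 9) (pow_nonneg ht 5)
  have m10_0 : (0:ℝ) ≤ (x-1)^10 * t^0 := mul_nonneg (pow_nonneg hu 10) (pow_nonneg ht 0)
  have m10_1 : (0:ℝ) ≤ (x-1)^10 * t^1 := mul_nonneg (pow_nonneg hu 10) (pow_nonneg ht 1)
  have m10_2 : (0:ℝ) ≤ (x-1)^10 * t^2 := mul_nonneg (pow_nonneg hu 10) (pow_nonneg ht 2)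
  have m10_3 : (0:ℝ) ≤ (x-1)^10 * t^3 := mul_nonneg (pow_nonneg hu 10) (pow_nonneg ht 3)
  have m10_4 : (0:ℝ) ≤ (x-1)^10 * t^4 := mul_nonneg (pow_nonneg hu 10) (pow_nonneg ht 4)
  have m11_0 : (0:ℝ) ≤ (x-1)^11 * t^0 := mul_nonneg (pow_nonneg hu 11) (pow_nonneg ht 0)
  have m11_1 : (0:ℝ) ≤ (x-1)^11 * t^1 := mul_nonneg (pow_nonneg hu 11) (pow_nonneg ht 1)
  have m11_2 : (0:ℝ) ≤ (x-1)^11 * t^2 := mul_nonneg (pow_nonneg hu 11) (pow_nonneg ht 2)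
  have m11_3 : (0:ℝ) ≤ (x-1)^11 * t^3 := mul_nonneg (pow_nonneg hu 11) (pow_nonneg ht 3)
  have m11_4 : (0:ℝ) ≤ (x-1)^11 * t^4 := mul_nonneg (pow_nonneg hu 11) (pow_nonneg ht 4)
  have m12_0 : (0:ℝ) ≤ (x-1)^12 * t^0 := mul_nonneg (pow_nonneg hu 12) (pow_nonneg ht 0)
  have m12_1 : (0:ℝ) ≤ (x-1)^12 * t^1 := mul_nonneg (pow_nonneg hu 12) (pow_nonneg ht 1)
  have m12_2 : (0:ℝ) ≤ (x-1)^12 * t^2 := mul_nonneg (pow_nonneg hu 12) (pow_nonneg ht 2)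
  have m12_3 : (0:ℝ) ≤ (x-1)^12 * t^3 := mul_nonneg (pow_nonneg hu 12) (pow_nonneg ht 3)
  have m13_0 : (0:ℝ) ≤ (x-1)^13 * t^0 := mul_nonneg (pow_nonneg hu 13) (pow_nonneg ht 0)
  have m13_1 : (0:ℝ) ≤ (x-1)^13 * t^1 := mul_nonneg (pow_nonneg hu 13) (pow_nonneg ht 1)
  have m13_2 : (0:ℝ) ≤ (x-1)^13 * t^2 := mul_nonneg (pow_nonneg hu 13) (pow_nonneg ht 2)
  have m13_3 : (0:ℝ) ≤ (x-1)^13 * t^3 := mul_nonneg (pow_nonneg hu 13) (pow_nonneg ht 3)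
  have m14_0 : (0:ℝ) ≤ (x-1)^14 * t^0 := mul_nonneg (pow_nonneg hu 14) (pow_nonneg ht 0)
  have m14_1 : (0:ℝ) ≤ (x-1)^14 * t^1 := mul_nonneg (pow_nonneg hu 14) (pow_nonneg ht 1)
  have m14_2 : (0:ℝ) ≤ (x-1)^14 * t^2 := mul_nonneg (pow_nonneg hu 14) (pow_nonneg ht 2)
  have m15_0 : (0:ℝ) ≤ (x-1)^15 * t^0 := mul_nonneg (pow_nonneg hu 15) (pow_nonneg ht 0)
  have m15_1 : (0:ℝ) ≤ (x-1)^15 * t^1 := mul_nonneg (pow_nonneg hu 15) (pow_nonneg ht 1)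
  have m15_2 : (0:ℝ) ≤ (x-1)^15 * t^2 := mul_nonneg (pow_nonneg hu 15) (pow_nonneg ht 2)
  have m16_0 : (0:ℝ) ≤ (x-1)^16 * t^0 := mul_nonneg (pow_nonneg hu 16) (pow_nonneg ht 0)
  have m16_1 : (0:ℝ) ≤ (x-1)^16 * t^1 := mul_nonneg (pow_nonneg hu 16) (pow_nonneg ht 1)
  have m17_0 : (0:ℝ) ≤ (x-1)^17 * t^0 := mul_nonneg (pow_nonneg hu 17) (pow_nonneg ht 0)
  have m17_1 : (0:ℝ) ≤ (x-1)^17 * t^1 := mul_nonneg (pow_nonneg hu 17) (pow_nonneg ht 1)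
  have m18_0 : (0:ℝ) ≤ (x-1)^18 * t^0 := mul_nonneg (pow_nonneg hu 18) (pow_nonneg ht 0)
  have m19_0 : (0:ℝ) ≤ (x-1)^19 * t^0 := mul_nonneg (pow_nonneg hu 19) (pow_nonneg ht 0)
  have m1_0 : (0:ℝ) ≤ (x-1)^1 := pow_nonneg hu 1
  have m2_0 : (0:ℝ) ≤ (x-1)^2 := pow_nonneg hu 2
  have m3_0 : (0:ℝ) ≤ (x-1)^3 := pow_nonneg hu 3
  have m4_0 : (0:ℝ) ≤ (x-1)^4 := pow_nonneg hu 4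
  have m5_0 : (0:ℝ) ≤ (x-1)^5 := pow_nonneg hu 5
  have m6_0 : (0:ℝ) ≤ (x-1)^6 := pow_nonneg hu 6
  have sq0 : (0:ℝ) ≤ (2*((16647/5 : ℝ))*t + ((-22788/5 : ℝ)))^2 := sq_nonneg _
  have sq1 : (0:ℝ) ≤ (x-1)^1 * (2*((155941/5 : ℝ))*t + ((-217008/5 : ℝ)))^2 := mul_nonneg (pow_nonneg hu 1) (sq_nonneg _)
  have sq2 : (0:ℝ) ≤ (x-1)^2 * (2*((2866119/20 : ℝ))*t + ((-932886/5 : ℝ)))^2 := mul_nonneg (pow_nonneg hu 2) (sq_nonneg _)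
  have sq3 : (0:ℝ) ≤ (x-1)^3 * (2*((12796553/30 : ℝ))*t + ((-2359294/5 : ℝ)))^2 := mul_nonneg (pow_nonneg hu 3) (sq_nonneg _)
  have sq4 : (0:ℝ) ≤ (x-1)^4 * (2*((1818929/2 : ℝ))*t + ((-15111361/20 : ℝ)))^2 := mul_nonneg (pow_nonneg hu 4) (sq_nonneg _)
  have sq5 : (0:ℝ) ≤ (x-1)^5 * (2*((4354672/3 : ℝ))*t + ((-4368595/6 : ℝ)))^2 := mul_nonneg (pow_nonneg hu 5) (sq_nonneg _)
  have sq6 : (0:ℝ) ≤ (x-1)^6 * (2*((17701929/10 : ℝ))*t + ((-1145662/5 : ℝ)))^2 := mul_nonneg (pow_nonneg hu 6) (sq_nonneg _)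
  linarith

lemma wnpos (x t : ℝ) (hx : 1 ≤ x) (ht0 : 0 ≤ t) :
    (0:ℝ) ≤ (13/60 : ℝ)*x^6 - (1/6 : ℝ)*x^8 + (1/2 : ℝ)*x^10 + x^11 + x^12 - (41/60 : ℝ)*x^4*t + (11/6 : ℝ)*x^8*t + 5*x^9*t + 6*x^10*t + (13/20 : ℝ)*x^2*t^2 + (7/15 : ℝ)*x^4*t^2 + (7/3 : ℝ)*x^6*t^2 + 10*x^7*t^2 + 15*x^8*t^2 + (11/420 : ℝ)*t^3 + (4/15 : ℝ)*x^2*t^3 + x^4*t^3 + 10*x^5*t^3 + 20*x^6*t^3 - (1/30 : ℝ)*t^4 - (1/6 : ℝ)*x^2*t^4 + 5*x^3*t^4 + 15*x^4*t^4 - (1/6 : ℝ)*t^5 + x*t^5 + 6*x^2*t^5 + t^6 := by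
  have hu : (0:ℝ) ≤ x - 1 := by linarith
  have ht : (0:ℝ) ≤ t := ht0
  have w0_1 : (0:ℝ) ≤ (x-1)^0 * t^1 := mul_nonneg (pow_nonneg hu 0) (pow_nonneg ht 1)
  have w0_2 : (0:ℝ) ≤ (x-1)^0 * t^2 := mul_nonneg (pow_nonneg hu 0) (pow_nonneg ht 2)
  have w0_3 : (0:ℝ) ≤ (x-1)^0 * t^3 := mul_nonneg (pow_nonneg hu 0) (pow_nonneg ht 3)
  have w0_4 : (0:ℝ) ≤ (x-1)^0 * t^4 := mul_nonneg (pow_nonneg hu 0) (pow_nonneg ht 4)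
  have w0_5 : (0:ℝ) ≤ (x-1)^0 * t^5 := mul_nonneg (pow_nonneg hu 0) (pow_nonneg ht 5)
  have w0_6 : (0:ℝ) ≤ (x-1)^0 * t^6 := mul_nonneg (pow_nonneg hu 0) (pow_nonneg ht 6)
  have w1_0 : (0:ℝ) ≤ (x-1)^1 * t^0 := mul_nonneg (pow_nonneg hu 1) (pow_nonneg ht 0)
  have w1_1 : (0:ℝ) ≤ (x-1)^1 * t^1 := mul_nonneg (pow_nonneg hu 1) (pow_nonneg ht 1)
  have w1_2 : (0:ℝ) ≤ (x-1)^1 * t^2 := mul_nonneg (pow_nonneg hu 1) (pow_nonneg ht 2)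
  have w1_3 : (0:ℝ) ≤ (x-1)^1 * t^3 := mul_nonneg (pow_nonneg hu 1) (pow_nonneg ht 3)
  have w1_4 : (0:ℝ) ≤ (x-1)^1 * t^4 := mul_nonneg (pow_nonneg hu 1) (pow_nonneg ht 4)
  have w1_5 : (0:ℝ) ≤ (x-1)^1 * t^5 := mul_nonneg (pow_nonneg hu 1) (pow_nonneg ht 5)
  have w2_0 : (0:ℝ) ≤ (x-1)^2 * t^0 := mul_nonneg (pow_nonneg hu 2) (pow_nonneg ht 0)
  have w2_1 : (0:ℝ) ≤ (x-1)^2 * t^1 := mul_nonneg (pow_nonneg hu 2) (pow_nonneg ht 1)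
  have w2_2 : (0:ℝ) ≤ (x-1)^2 * t^2 := mul_nonneg (pow_nonneg hu 2) (pow_nonneg ht 2)
  have w2_3 : (0:ℝ) ≤ (x-1)^2 * t^3 := mul_nonneg (pow_nonneg hu 2) (pow_nonneg ht 3)
  have w2_4 : (0:ℝ) ≤ (x-1)^2 * t^4 := mul_nonneg (pow_nonneg hu 2) (pow_nonneg ht 4)
  have w2_5 : (0:ℝ) ≤ (x-1)^2 * t^5 := mul_nonneg (pow_nonneg hu 2) (pow_nonneg ht 5)
  have w3_0 : (0:ℝ) ≤ (x-1)^3 * t^0 := mul_nonneg (pow_nonneg hu 3) (pow_nonneg ht 0)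
  have w3_1 : (0:ℝ) ≤ (x-1)^3 * t^1 := mul_nonneg (pow_nonneg hu 3) (pow_nonneg ht 1)
  have w3_2 : (0:ℝ) ≤ (x-1)^3 * t^2 := mul_nonneg (pow_nonneg hu 3) (pow_nonneg ht 2)
  have w3_3 : (0:ℝ) ≤ (x-1)^3 * t^3 := mul_nonneg (pow_nonneg hu 3) (pow_nonneg ht 3)
  have w3_4 : (0:ℝ) ≤ (x-1)^3 * t^4 := mul_nonneg (pow_nonneg hu 3) (pow_nonneg ht 4)
  have w4_0 : (0:ℝ) ≤ (x-1)^4 * t^0 := mul_nonneg (pow_nonneg hu 4) (pow_nonneg ht 0)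
  have w4_1 : (0:ℝ) ≤ (x-1)^4 * t^1 := mul_nonneg (pow_nonneg hu 4) (pow_nonneg ht 1)
  have w4_2 : (0:ℝ) ≤ (x-1)^4 * t^2 := mul_nonneg (pow_nonneg hu 4) (pow_nonneg ht 2)
  have w4_3 : (0:ℝ) ≤ (x-1)^4 * t^3 := mul_nonneg (pow_nonneg hu 4) (pow_nonneg ht 3)
  have w4_4 : (0:ℝ) ≤ (x-1)^4 * t^4 := mul_nonneg (pow_nonneg hu 4) (pow_nonneg ht 4)
  have w5_0 : (0:ℝ) ≤ (x-1)^5 * t^0 := mul_nonneg (pow_nonneg hu 5) (pow_nonneg ht 0)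
  have w5_1 : (0:ℝ) ≤ (x-1)^5 * t^1 := mul_nonneg (pow_nonneg hu 5) (pow_nonneg ht 1)
  have w5_2 : (0:ℝ) ≤ (x-1)^5 * t^2 := mul_nonneg (pow_nonneg hu 5) (pow_nonneg ht 2)
  have w5_3 : (0:ℝ) ≤ (x-1)^5 * t^3 := mul_nonneg (pow_nonneg hu 5) (pow_nonneg ht 3)
  have w6_0 : (0:ℝ) ≤ (x-1)^6 * t^0 := mul_nonneg (pow_nonneg hu 6) (pow_nonneg ht 0)
  have w6_1 : (0:ℝ) ≤ (x-1)^6 * t^1 := mul_nonneg (pow_nonneg hu 6) (pow_nonneg ht 1)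
  have w6_2 : (0:ℝ) ≤ (x-1)^6 * t^2 := mul_nonneg (pow_nonneg hu 6) (pow_nonneg ht 2)
  have w6_3 : (0:ℝ) ≤ (x-1)^6 * t^3 := mul_nonneg (pow_nonneg hu 6) (pow_nonneg ht 3)
  have w7_0 : (0:ℝ) ≤ (x-1)^7 * t^0 := mul_nonneg (pow_nonneg hu 7) (pow_nonneg ht 0)
  have w7_1 : (0:ℝ) ≤ (x-1)^7 * t^1 := mul_nonneg (pow_nonneg hu 7) (pow_nonneg ht 1)
  have w7_2 : (0:ℝ) ≤ (x-1)^7 * t^2 := mul_nonneg (pow_nonneg hu 7) (pow_nonneg ht 2)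
  have w8_0 : (0:ℝ) ≤ (x-1)^8 * t^0 := mul_nonneg (pow_nonneg hu 8) (pow_nonneg ht 0)
  have w8_1 : (0:ℝ) ≤ (x-1)^8 * t^1 := mul_nonneg (pow_nonneg hu 8) (pow_nonneg ht 1)
  have w8_2 : (0:ℝ) ≤ (x-1)^8 * t^2 := mul_nonneg (pow_nonneg hu 8) (pow_nonneg ht 2)
  have w9_0 : (0:ℝ) ≤ (x-1)^9 * t^0 := mul_nonneg (pow_nonneg hu 9) (pow_nonneg ht 0)
  have w9_1 : (0:ℝ) ≤ (x-1)^9 * t^1 := mul_nonneg (pow_nonneg hu 9) (pow_nonneg ht 1)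
  have w10_0 : (0:ℝ) ≤ (x-1)^10 * t^0 := mul_nonneg (pow_nonneg hu 10) (pow_nonneg ht 0)
  have w10_1 : (0:ℝ) ≤ (x-1)^10 * t^1 := mul_nonneg (pow_nonneg hu 10) (pow_nonneg ht 1)
  have w11_0 : (0:ℝ) ≤ (x-1)^11 * t^0 := mul_nonneg (pow_nonneg hu 11) (pow_nonneg ht 0)
  have w12_0 : (0:ℝ) ≤ (x-1)^12 * t^0 := mul_nonneg (pow_nonneg hu 12) (pow_nonneg ht 0)
  linarith

lemma Wnonneg (x t : ℝ) (hx : 1 ≤ x) (ht : 0 < t) : 0 ≤ W t x := by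
  have h1 : (0:ℝ) < x^2 + t := by nlinarith
  exact div_nonneg (wnpos x t hx ht.le) (by positivity)

lemma key (x t : ℝ) (hx : 1 ≤ x) (ht : 0 < t) :
    2*x/(x^2+t)^2 ≤ W t x - W t (x+1) := by
  have h1 : (0:ℝ) < x^2 + t := by nlinarith
  have h2 : (0:ℝ) < (x+1)^2 + t := by nlinarith
  have hP := keypoly x t hx ht.le
  have hPD := mul_nonneg hP (pow_nonneg h1.le 2)
  unfold W
  rw [div_sub_div _ _ (by positivity) (by positivity),
      div_le_div_iff₀ (by positivity) (by positivity)]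
  linarith [hPD]

lemma Wone (r : ℝ) (hr : 0 < r) :
    W (r^2) 1 < 1 / r ^ 2 - 1 / (6 * r ^ 4) - 1 / (30 * r ^ 6) + 3 / (50 * r ^ 8) := by
  have h1 : (0:ℝ) < 1 + r^2 := by positivity
  have expand : (1 / r ^ 2 - 1 / (6 * r ^ 4) - 1 / (30 * r ^ 6) + 3 / (50 * r ^ 8)) - W (r^2) 1
      = (9 + 58*(r^2) + 129*(r^2)^2 + 185*(r^2)^3 + (565/2 : ℝ)*(r^2)^4 + (933/2 : ℝ)*(r^2)^5 + (131/2 : ℝ)*(r^2)^6 + (71/14 : ℝ)*(r^2)^7) / (150 * r^8 * (1 + r^2)^7) := by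
    unfold W
    field_simp
    ring
  have hpos : (0:ℝ) < (9 + 58*(r^2) + 129*(r^2)^2 + 185*(r^2)^3 + (565/2 : ℝ)*(r^2)^4 + (933/2 : ℝ)*(r^2)^5 + (131/2 : ℝ)*(r^2)^6 + (71/14 : ℝ)*(r^2)^7) / (150 * r^8 * (1 + r^2)^7) := by
    positivity
  linarith [expand ▸ hpos]

theorem stmt_6 (r : ℝ) (hr : 0 < r) :
    S r < 1 / r ^ 2 - 1 / (6 * r ^ 4) - 1 / (30 * r ^ 6) + 3 / (50 * r ^ 8) := by
  have ht : (0:ℝ) < r^2 := by positivity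
  set t := r^2 with htdef
  have hterm : ∀ n : ℕ, (2 * ((n : ℝ) + 1)) / ((((n : ℝ) + 1) ^ 2 + t) ^ 2)
      ≤ W t ((n:ℝ)+1) - W t ((n:ℝ)+2) := by
    intro n
    have h := key ((n:ℝ)+1) t (by have := Nat.cast_nonneg (α:=ℝ) n; linarith) ht
    have e : ((n:ℝ)+1)+1 = (n:ℝ)+2 := by ring
    rw [e] at h
    exact h
  have hpartial : ∀ N : ℕ, ∑ n ∈ Finset.range N,
      (2 * ((n : ℝ) + 1)) / ((((n : ℝ) + 1) ^ 2 + t) ^ 2) ≤ W t 1 - W t ((N:ℝ)+1) := by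
    intro N
    induction N with
    | zero => simp
    | succ N ih =>
      rw [Finset.sum_range_succ]
      have h := hterm N
      have e : ((N:ℝ)+1)+1 = ((N:ℕ):ℝ)+2 := by push_cast; ring
      push_cast
      rw [show ((N:ℝ)+1+1) = (N:ℝ)+2 from by ring]
      push_cast at ih h
      linarith
  have hle : S r ≤ W t 1 := by
    unfold S
    rw [htdef]
    apply Real.tsum_le_of_sum_range_le
    · intro n
      positivity
    · intro N
      have h := hpartial N
      have hw : 0 ≤ W t ((N:ℝ)+1) := by
        apply Wnonneg _ _ _ ht
        have : (0:ℝ) ≤ (N:ℝ) := Nat.cast_nonneg N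
        linarith
      rw [htdef] at h
      linarith
  have := Wone r hr
  calc S r ≤ W t 1 := hle
    _ < _ := this
end

section
/- For all real µ > 1 and x > 0, Σ_{n≥1} 2n/(n²+x²)^µ < 1/((µ-1)x^{2µ-2}). -/
open Real

-- midpoint convexity step
lemma mid_step (μ A t : ℝ) (hμ : 1 < μ) (h0 : 0 < t) (hA : t < A) :
    2 * A ^ (-μ) < (A - t) ^ (-μ) + (A + t) ^ (-μ) := by
  have hA0 : 0 < A := h0.trans hA
  have h1 : (0:ℝ) < A - t := by linarith
  have h2 : (0:ℝ) < A + t := by linarith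
  set p := (A - t) ^ (-μ) with hp
  set q := (A + t) ^ (-μ) with hq
  have hp0 : 0 < p := rpow_pos_of_pos h1 _
  have hq0 : 0 < q := rpow_pos_of_pos h2 _
  have hc0 : 0 < A ^ (-μ) := rpow_pos_of_pos hA0 _
  have hmul : (A ^ (-μ))^2 < p * q := by
    have : ((A - t) * (A + t)) ^ (-μ) = p * q := mul_rpow h1.le h2.le
    rw [← this]
    have harg : (A - t) * (A + t) < A * A := by nlinarith
    have harg0 : 0 < (A - t) * (A + t) := mul_pos h1 h2
    have := rpow_lt_rpow_of_neg harg0 (by nlinarith : (A - t) * (A + t) < A ^ 2) (by linarith : -μ < 0)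
    calc (A ^ (-μ))^2 = (A ^ 2 : ℝ) ^ (-μ) := by
          rw [← rpow_natCast A 2, ← rpow_natCast (A ^ (-μ)) 2, ← rpow_mul hA0.le, ← rpow_mul hA0.le]
          ring_nf
      _ < ((A - t) * (A + t)) ^ (-μ) := this
  nlinarith [sq_nonneg (p - q), sq_nonneg (p + q - 2 * A ^ (-μ))]

lemma key_s8 (μ A h : ℝ) (hμ : 1 < μ) (h0 : 0 < h) (hA : h < A) :
    2 * h * (μ - 1) * A ^ (-μ) < (A - h) ^ (1 - μ) - (A + h) ^ (1 - μ) := by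
  have hA0 : 0 < A := h0.trans hA
  set F : ℝ → ℝ := fun t => (A - t) ^ (1 - μ) - (A + t) ^ (1 - μ) - 2 * (μ - 1) * A ^ (-μ) * t
    with hF
  have hd : ∀ t ∈ Set.Icc (0:ℝ) h,
      HasDerivAt F ((μ - 1) * ((A - t) ^ (-μ) + (A + t) ^ (-μ) - 2 * A ^ (-μ))) t := by
    intro t ht
    have h1 : (0:ℝ) < A - t := by cases ht; linarith
    have h2 : (0:ℝ) < A + t := by cases ht; linarith
    have d1 : HasDerivAt (fun s => (A - s) ^ (1 - μ)) ((-1) * (1 - μ) * (A - t) ^ (1 - μ - 1)) t :=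
      HasDerivAt.rpow_const ((hasDerivAt_id t).const_sub A) (Or.inl h1.ne')
    have d2 : HasDerivAt (fun s => (A + s) ^ (1 - μ)) (1 * (1 - μ) * (A + t) ^ (1 - μ - 1)) t :=
      HasDerivAt.rpow_const ((hasDerivAt_id t).const_add A) (Or.inl h2.ne')
    have d3 : HasDerivAt (fun s => 2 * (μ - 1) * A ^ (-μ) * s) (2 * (μ - 1) * A ^ (-μ)) t := by
      simpa using (hasDerivAt_id t).const_mul (2 * (μ - 1) * A ^ (-μ))
    have := (d1.sub d2).sub d3
    refine this.congr_deriv ?_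
    have e : 1 - μ - 1 = -μ := by ring
    rw [e]; ring
  have hmono : StrictMonoOn F (Set.Icc 0 h) := by
    apply strictMonoOn_of_deriv_pos (convex_Icc 0 h)
    · exact fun t ht => ((hd t ht).continuousAt).continuousWithinAt
    · intro t ht
      rw [interior_Icc] at ht
      rw [(hd t (Set.mem_Icc.2 ⟨ht.1.le, ht.2.le⟩)).deriv]
      have := mid_step μ A t hμ ht.1 (ht.2.trans hA)
      nlinarith
  have := hmono (Set.left_mem_Icc.2 h0.le) (Set.right_mem_Icc.2 h0.le) h0
  simp only [hF] at this
  simp only [sub_zero, add_zero, mul_zero] at this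
  linarith

theorem stmt_8 (μ x : ℝ) (hμ : 1 < μ) (hx : 0 < x) :
    (∑' n : ℕ, (2 * ((n : ℝ) + 1)) / ((((n : ℝ) + 1) ^ 2 + x ^ 2) ^ μ))
      < 1 / ((μ - 1) * x ^ (2 * μ - 2)) := by
  have hμ1 : (0:ℝ) < μ - 1 := by linarith
  set b : ℕ → ℝ := fun n => ((n : ℝ) * ((n : ℝ) + 1) + x ^ 2) ^ (1 - μ) with hb
  set f : ℕ → ℝ := fun n => (2 * ((n : ℝ) + 1)) / ((((n : ℝ) + 1) ^ 2 + x ^ 2) ^ μ) with hf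
  set g : ℕ → ℝ := fun n => (b n - b (n + 1)) / (μ - 1) with hg
  have hf0 : ∀ n, 0 ≤ f n := by
    intro n
    have : (0:ℝ) < ((n : ℝ) + 1) ^ 2 + x ^ 2 := by positivity
    positivity
  have hfg : ∀ n, f n < g n := by
    intro n
    set m : ℝ := (n : ℝ) + 1 with hm
    have hm0 : (0:ℝ) < m := by positivity
    have hm1 : (1:ℝ) ≤ m := by simp [hm]
    set A : ℝ := m ^ 2 + x ^ 2 with hA
    have hA0 : (0:ℝ) < A := by positivity
    have hmA : m < A := by nlinarith
    have hk := key_s8 μ A m hμ hm0 hmA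
    have e1 : A - m = (n : ℝ) * ((n : ℝ) + 1) + x ^ 2 := by push_cast [hA, hm]; ring
    have e2 : A + m = ((n : ℝ) + 1) * (((n : ℝ) + 1) + 1) + x ^ 2 := by
      push_cast [hA, hm]; ring
    have hfn : f n = 2 * m * A ^ (-μ) := by
      simp only [hf, hm, hA]
      rw [rpow_neg hA0.le]
      ring
    have hgn : g n = ((A - m) ^ (1 - μ) - (A + m) ^ (1 - μ)) / (μ - 1) := by
      simp only [hg, hb, e1, e2]
      push_cast
      ring_nf
    rw [hfn, hgn, lt_div_iff₀ hμ1]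
    nlinarith
  have hg0 : ∀ n, 0 ≤ g n := fun n => le_trans (hf0 n) (hfg n).le
  have hb0 : ∀ n, 0 ≤ b n := fun n => rpow_nonneg (by positivity) _
  have hpart : ∀ n, ∑ i ∈ Finset.range n, g i ≤ b 0 / (μ - 1) := by
    intro n
    have : ∑ i ∈ Finset.range n, g i = (b 0 - b n) / (μ - 1) := by
      rw [hg]
      rw [← Finset.sum_div, Finset.sum_range_sub' b n]
    rw [this]
    exact div_le_div_of_nonneg_right (by linarith [hb0 n]) hμ1.le
  have hsumg : Summable g := summable_of_sum_range_le hg0 hpart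
  have h1 : (∑' n, f n) < ∑' n, g n :=
    Summable.tsum_lt_tsum_of_nonneg hf0 (fun n => (hfg n).le) (hfg 0) hsumg
  have h2 : (∑' n, g n) ≤ b 0 / (μ - 1) := Summable.tsum_le_of_sum_range_le hsumg hpart
  have h3 : b 0 / (μ - 1) = 1 / ((μ - 1) * x ^ (2 * μ - 2)) := by
    have e : b 0 = (x ^ (2 * μ - 2))⁻¹ := by
      simp only [hb]
      push_cast
      rw [zero_mul, zero_add, ← rpow_natCast x 2, ← rpow_mul hx.le, ← rpow_neg hx.le]
      norm_num
      ring_nf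
    rw [e]
    have : (0:ℝ) < x ^ (2 * μ - 2) := rpow_pos_of_pos hx _
    field_simp
  calc (∑' n, f n) < ∑' n, g n := h1
    _ ≤ b 0 / (μ - 1) := h2
    _ = _ := h3
end

section
/- For 0 < r < 1, S(r) = Σ_{n≥0} (-1)^n (2n+2) ζ(2n+3) r^{2n}, where S(r) = Σ_{n≥1} 2n/(n²+r²)² and ζ is the Riemann zeta function. -/
open Filter Topology

/-- `∑ (n+1) x^n = 1/(1-x)^2` for `|x| < 1`. -/
lemma hasSum_succ_geom {x : ℝ} (hx : |x| < 1) :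
    HasSum (fun n : ℕ => ((n : ℝ) + 1) * x ^ n) (1 / (1 - x) ^ 2) := by
  have hx' : ‖x‖ < 1 := by rwa [Real.norm_eq_abs]
  have h1 : HasSum (fun n : ℕ => (n : ℝ) * x ^ n) (x / (1 - x) ^ 2) :=
    hasSum_coe_mul_geometric_of_norm_lt_one hx'
  have h2 : HasSum (fun n : ℕ => x ^ n) (1 - x)⁻¹ := hasSum_geometric_of_norm_lt_one hx'
  have hne : (1 : ℝ) - x ≠ 0 := by
    intro h
    have : x = 1 := by linarith
    rw [this] at hx; norm_num at hx
  have := h1.add h2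
  convert this using 1
  · ext n; ring
  · field_simp; ring

lemma summable_one_div_succ_pow {k : ℕ} (hk : 1 < k) :
    Summable (fun m : ℕ => 1 / ((m : ℝ) + 1) ^ k) := by
  have := (Real.summable_one_div_nat_pow.mpr hk)
  have h := (summable_nat_add_iff 1).mpr this
  refine h.congr fun m => ?_
  push_cast
  ring_nf

lemma zeta_re_eq {k : ℕ} (hk : 1 < k) :
    (riemannZeta k).re = ∑' m : ℕ, 1 / ((m : ℝ) + 1) ^ k := by
  rw [zeta_nat_eq_tsum_of_gt_one hk]
  have h : ∀ n : ℕ, (1 / (n : ℂ) ^ k) = ((1 / (n : ℝ) ^ k : ℝ) : ℂ) := by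
    intro n; push_cast; ring
  rw [tsum_congr h, ← Complex.ofReal_tsum, Complex.ofReal_re]
  have hs : Summable (fun n : ℕ => 1 / (n : ℝ) ^ k) := Real.summable_one_div_nat_pow.mpr hk
  rw [Summable.tsum_eq_zero_add hs]
  have h0 : (1 : ℝ) / (0 : ℕ) ^ k = 0 := by
    rw [Nat.cast_zero, zero_pow (by omega), div_zero]
  rw [h0, zero_add]
  apply tsum_congr
  intro m
  push_cast
  ring_nf

theorem stmt_10 (r : ℝ) (hr0 : 0 < r) (hr1 : r < 1) :
    S r = ∑' n : ℕ, (-1) ^ n * (2 * (n : ℝ) + 2) *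
      (riemannZeta (2 * (n : ℂ) + 3)).re * r ^ (2 * n) := by
  classical
  set f : ℕ → ℕ → ℝ := fun m n =>
    2 / ((m : ℝ) + 1) ^ 3 * (((n : ℝ) + 1) * (-(r ^ 2 / ((m : ℝ) + 1) ^ 2)) ^ n) with hf
  have hM : ∀ m : ℕ, (0 : ℝ) < (m : ℝ) + 1 := fun m => by positivity
  have hx : ∀ m : ℕ, |(-(r ^ 2 / ((m : ℝ) + 1) ^ 2))| < 1 := by
    intro m
    rw [abs_neg, abs_of_nonneg (by positivity)]
    rw [div_lt_one (by positivity)]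
    have h1 : r ^ 2 < 1 := by nlinarith
    have h2 : (1 : ℝ) ≤ ((m : ℝ) + 1) ^ 2 := by nlinarith [hM m, Nat.cast_nonneg (α := ℝ) m]
    linarith
  -- inner sum over n for fixed m
  have hinner : ∀ m : ℕ, HasSum (fun n => f m n)
      (2 * ((m : ℝ) + 1) / ((((m : ℝ) + 1) ^ 2 + r ^ 2) ^ 2)) := by
    intro m
    have h := (hasSum_succ_geom (hx m)).mul_left (2 / ((m : ℝ) + 1) ^ 3)
    convert h using 1
    · rfl
    have hMne : ((m : ℝ) + 1) ≠ 0 := (hM m).ne'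
    have hden : (((m : ℝ) + 1) ^ 2 + r ^ 2) ≠ 0 := by positivity
    rw [sub_neg_eq_add]
    field_simp
  -- summability on ℕ × ℕ
  have habs : Summable (fun p : ℕ × ℕ => |f p.1 p.2|) := by
    rw [summable_prod_of_nonneg (fun p => abs_nonneg _)]
    constructor
    · intro m
      exact ((hinner m).summable).abs
    · have key : ∀ m : ℕ, ∑' n, |f m n| ≤ 2 / (1 - r ^ 2) ^ 2 * (1 / ((m : ℝ) + 1) ^ 3) := by
        intro m
        have hy : |r ^ 2 / ((m : ℝ) + 1) ^ 2| < 1 := by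
          have := hx m; rwa [abs_neg] at this
        have hsum : HasSum (fun n : ℕ => ((n : ℝ) + 1) * (r ^ 2 / ((m : ℝ) + 1) ^ 2) ^ n)
            (1 / (1 - r ^ 2 / ((m : ℝ) + 1) ^ 2) ^ 2) := hasSum_succ_geom hy
        have habsval : ∀ n : ℕ, |f m n| =
            2 / ((m : ℝ) + 1) ^ 3 * (((n : ℝ) + 1) * (r ^ 2 / ((m : ℝ) + 1) ^ 2) ^ n) := by
          intro n
          rw [hf]
          rw [abs_mul, abs_mul, abs_pow, abs_neg]
          rw [abs_of_nonneg (by positivity : (0:ℝ) ≤ 2 / ((m : ℝ) + 1) ^ 3),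
            abs_of_nonneg (by positivity : (0:ℝ) ≤ (n : ℝ) + 1),
            abs_of_nonneg (by positivity : (0:ℝ) ≤ r ^ 2 / ((m : ℝ) + 1) ^ 2)]
        have h2 := hsum.mul_left (2 / ((m : ℝ) + 1) ^ 3)
        have heq : ∑' n, |f m n| = 2 / ((m : ℝ) + 1) ^ 3 *
            (1 / (1 - r ^ 2 / ((m : ℝ) + 1) ^ 2) ^ 2) := by
          rw [tsum_congr habsval]
          exact h2.tsum_eq
        rw [heq]
        have hr2 : r ^ 2 < 1 := by nlinarith
        have hMsq : (1 : ℝ) ≤ ((m : ℝ) + 1) ^ 2 := by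
          nlinarith [Nat.cast_nonneg (α := ℝ) m]
        have hylt : r ^ 2 / ((m : ℝ) + 1) ^ 2 ≤ r ^ 2 := by
          rw [div_le_iff₀ (by positivity)]
          nlinarith [sq_nonneg r]
        have hd : 1 - r ^ 2 ≤ 1 - r ^ 2 / ((m : ℝ) + 1) ^ 2 := by linarith
        have hdpos : (0 : ℝ) < 1 - r ^ 2 := by linarith
        have : 1 / (1 - r ^ 2 / ((m : ℝ) + 1) ^ 2) ^ 2 ≤ 1 / (1 - r ^ 2) ^ 2 := by
          apply one_div_le_one_div_of_le (by positivity)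
          nlinarith
        have h3 : (0:ℝ) ≤ 2 / ((m : ℝ) + 1) ^ 3 := by positivity
        calc 2 / ((m : ℝ) + 1) ^ 3 * (1 / (1 - r ^ 2 / ((m : ℝ) + 1) ^ 2) ^ 2)
            ≤ 2 / ((m : ℝ) + 1) ^ 3 * (1 / (1 - r ^ 2) ^ 2) := by
              exact mul_le_mul_of_nonneg_left this h3
          _ = 2 / (1 - r ^ 2) ^ 2 * (1 / ((m : ℝ) + 1) ^ 3) := by ring
      apply Summable.of_nonneg_of_le (fun m => tsum_nonneg fun n => abs_nonneg _) key
      exact (summable_one_div_succ_pow (by norm_num : (1:ℕ) < 3)).mul_left _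
  have hF : Summable (Function.uncurry f) := by
    rwa [← summable_abs_iff]
  -- rewrite f in "column" form
  have hcol : ∀ m n : ℕ, f m n =
      ((-1) ^ n * (2 * (n : ℝ) + 2) * r ^ (2 * n)) * (1 / ((m : ℝ) + 1) ^ (2 * n + 3)) := by
    intro m n
    have hMne : ((m : ℝ) + 1) ≠ 0 := (hM m).ne'
    have hpow : (-(r ^ 2 / ((m : ℝ) + 1) ^ 2)) ^ n
        = (-1) ^ n * r ^ (2 * n) / ((m : ℝ) + 1) ^ (2 * n) := by
      rw [neg_pow, div_pow, ← pow_mul, ← pow_mul]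
      ring
    rw [hf]
    simp only []
    rw [hpow]
    field_simp
    ring
  -- sum over m for fixed n
  have houter : ∀ n : ℕ, HasSum (fun m => f m n)
      ((-1) ^ n * (2 * (n : ℝ) + 2) * (riemannZeta (2 * (n : ℂ) + 3)).re * r ^ (2 * n)) := by
    intro n
    have hk : 1 < 2 * n + 3 := by omega
    have hz : HasSum (fun m : ℕ => 1 / ((m : ℝ) + 1) ^ (2 * n + 3))
        ((riemannZeta (2 * n + 3 : ℕ)).re) := by
      rw [zeta_re_eq hk]
      exact (summable_one_div_succ_pow hk).hasSum
    have hcast : ((2 * n + 3 : ℕ) : ℂ) = 2 * (n : ℂ) + 3 := by push_cast; ring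
    rw [hcast] at hz
    have h := hz.mul_left ((-1) ^ n * (2 * (n : ℝ) + 2) * r ^ (2 * n))
    convert h using 1
    · rfl
    · ext m; rw [hcol m]
    · ring
  -- assemble
  have step1 : S r = ∑' m : ℕ, ∑' n : ℕ, f m n := by
    unfold S
    apply tsum_congr
    intro m
    exact ((hinner m).tsum_eq).symm
  rw [step1, ← Summable.tsum_comm hF]
  apply tsum_congr
  intro n
  exact (houter n).tsum_eq
end

section
/- For 0 < r ≤ 0.3, S(r) lies between consecutive partial sums of its alternating expansion: 2ζ(3) - 4ζ(5)r² + 6ζ(7)r⁴ - 8ζ(9)r⁶ ≤ S(r) ≤ 2ζ(3) - 4ζ(5)r² + 6ζ(7)r⁴, where S(r) = Σ_{n≥1} 2n/(n²+r²)². -/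
open Filter Topology

noncomputable def Zr (k : ℕ) : ℝ := ∑' n : ℕ, 1 / ((n : ℝ) + 1) ^ k

lemma Zr_summable {k : ℕ} (hk : 1 < k) :
    Summable (fun n : ℕ => 1 / ((n : ℝ) + 1) ^ k) := by
  have h := (Real.summable_one_div_nat_pow (p := k)).mpr hk
  have h2 := (summable_nat_add_iff 1).mpr h
  simpa using h2

lemma zeta_re_eq_s14 {k : ℕ} (hk : 1 < k) : (riemannZeta k).re = Zr k := by
  have h1 : (1 : ℝ) < ((k : ℂ)).re := by
    simp only [Complex.natCast_re]
    exact_mod_cast hk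
  rw [zeta_eq_tsum_one_div_nat_add_one_cpow h1]
  have heq : ∀ n : ℕ, (1 / ((n : ℂ) + 1) ^ (k : ℂ)) = (((1 / ((n : ℝ) + 1) ^ k : ℝ)) : ℂ) := by
    intro n
    rw [Complex.cpow_natCast]
    push_cast
    ring
  rw [tsum_congr heq, ← Complex.ofReal_tsum, Complex.ofReal_re, Zr]

theorem stmt_14 (r : ℝ) (hr0 : 0 < r) (hr : r ≤ 0.3) :
    2 * (riemannZeta 3).re - 4 * (riemannZeta 5).re * r ^ 2
        + 6 * (riemannZeta 7).re * r ^ 4 - 8 * (riemannZeta 9).re * r ^ 6 ≤ S r ∧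
      S r ≤ 2 * (riemannZeta 3).re - 4 * (riemannZeta 5).re * r ^ 2
        + 6 * (riemannZeta 7).re * r ^ 4 := by
  set a : ℕ → ℝ := fun n => (2 * ((n : ℝ) + 1)) / ((((n : ℝ) + 1) ^ 2 + r ^ 2) ^ 2) with ha
  set u : ℕ → ℝ := fun n =>
    2 * (1 / ((n : ℝ) + 1) ^ 3) - 4 * r ^ 2 * (1 / ((n : ℝ) + 1) ^ 5)
      + 6 * r ^ 4 * (1 / ((n : ℝ) + 1) ^ 7) with hu
  set l : ℕ → ℝ := fun n => u n - 8 * r ^ 6 * (1 / ((n : ℝ) + 1) ^ 9) with hl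
  have hm : ∀ n : ℕ, (0 : ℝ) < (n : ℝ) + 1 := fun n => by positivity
  have hd : ∀ n : ℕ, (0 : ℝ) < (((n : ℝ) + 1) ^ 2 + r ^ 2) ^ 2 := fun n => by positivity
  -- termwise bounds
  have hau : ∀ n, a n ≤ u n := by
    intro n
    set m : ℝ := (n : ℝ) + 1
    have hm0 : (0 : ℝ) < m := hm n
    have key : u n - a n = (8 * r ^ 6 * m ^ 2 + 6 * r ^ 8) / (m ^ 7 * (m ^ 2 + r ^ 2) ^ 2) := by
      simp only [ha, hu]
      field_simp
      ring
    have h0 : (0:ℝ) ≤ u n - a n := key ▸ div_nonneg (by positivity) (by positivity)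
    linarith
  have hla : ∀ n, l n ≤ a n := by
    intro n
    set m : ℝ := (n : ℝ) + 1
    have hm0 : (0 : ℝ) < m := hm n
    have key : a n - l n = (10 * r ^ 8 * m ^ 2 + 8 * r ^ 10) / (m ^ 9 * (m ^ 2 + r ^ 2) ^ 2) := by
      simp only [ha, hu, hl]
      field_simp
      ring
    have h0 : (0:ℝ) ≤ a n - l n := key ▸ div_nonneg (by positivity) (by positivity)
    linarith
  -- summability
  have S3 := Zr_summable (k := 3) (by norm_num)
  have S5 := Zr_summable (k := 5) (by norm_num)
  have S7 := Zr_summable (k := 7) (by norm_num)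
  have S9 := Zr_summable (k := 9) (by norm_num)
  have hapos : ∀ n, 0 ≤ a n := fun n => div_nonneg (by positivity) (hd n).le
  have hle : ∀ n : ℕ, a n ≤ 2 * (1 / ((n : ℝ) + 1) ^ 3) := by
    intro n
    set m : ℝ := (n : ℝ) + 1
    have hm0 : (0 : ℝ) < m := hm n
    have key : 2 * (1 / m ^ 3) - a n = (4 * r ^ 2 * m ^ 2 + 2 * r ^ 4) / (m ^ 3 * (m ^ 2 + r ^ 2) ^ 2) := by
      simp only [ha]
      field_simp
      ring
    have h0 : (0:ℝ) ≤ 2 * (1 / m ^ 3) - a n := key ▸ div_nonneg (by positivity) (by positivity)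
    linarith
  have Sa : Summable a := Summable.of_nonneg_of_le hapos hle (S3.mul_left 2)
  have Su : Summable u := ((S3.mul_left 2).sub (S5.mul_left (4 * r ^ 2))).add
    (S7.mul_left (6 * r ^ 4))
  have Sl : Summable l := Su.sub (S9.mul_left (8 * r ^ 6))
  -- tsum computations
  have htu : ∑' n, u n = 2 * Zr 3 - 4 * r ^ 2 * Zr 5 + 6 * r ^ 4 * Zr 7 := by
    rw [hu]
    rw [Summable.tsum_add ((S3.mul_left 2).sub (S5.mul_left (4 * r ^ 2))) (S7.mul_left (6 * r ^ 4)),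
      Summable.tsum_sub (S3.mul_left 2) (S5.mul_left (4 * r ^ 2)),
      tsum_mul_left, tsum_mul_left, tsum_mul_left]
    rfl
  have htl : ∑' n, l n = 2 * Zr 3 - 4 * r ^ 2 * Zr 5 + 6 * r ^ 4 * Zr 7 - 8 * r ^ 6 * Zr 9 := by
    rw [hl, Summable.tsum_sub Su (S9.mul_left (8 * r ^ 6)), htu, tsum_mul_left]
    rfl
  have hS : S r = ∑' n, a n := rfl
  have hub : S r ≤ ∑' n, u n := by
    rw [hS]; exact Summable.tsum_le_tsum hau Sa Su
  have hlb : ∑' n, l n ≤ S r := by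
    rw [hS]; exact Summable.tsum_le_tsum hla Sl Sa
  have e3 : (riemannZeta 3).re = Zr 3 := by
    rw [show (3 : ℂ) = ((3 : ℕ) : ℂ) by norm_num]; exact zeta_re_eq_s14 (by norm_num)
  have e5 : (riemannZeta 5).re = Zr 5 := by
    rw [show (5 : ℂ) = ((5 : ℕ) : ℂ) by norm_num]; exact zeta_re_eq_s14 (by norm_num)
  have e7 : (riemannZeta 7).re = Zr 7 := by
    rw [show (7 : ℂ) = ((7 : ℕ) : ℂ) by norm_num]; exact zeta_re_eq_s14 (by norm_num)
  have e9 : (riemannZeta 9).re = Zr 9 := by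
    rw [show (9 : ℂ) = ((9 : ℕ) : ℂ) by norm_num]; exact zeta_re_eq_s14 (by norm_num)
  rw [e3, e5, e7, e9]
  constructor
  · rw [htl] at hlb; linarith
  · rw [htu] at hub; linarith
end

section
/- For r > 0 and m a positive integer, |S(r) - [Σ_{n=1}^{m-1} 2n/(n²+r²)² + 1/(m²+r²) + m/(m²+r²)² + (3m²-r²)/(6(m²+r²)³)]| ≤ (5m⁴ + 15m²r² + 6r⁴)/(16(m²+r²)⁵). -/
set_option maxRecDepth 8000
set_option maxHeartbeats 4000000

open Filter Topology

noncomputable def gfun (r : ℝ) (n : ℕ) : ℝ := (2 * (n : ℝ)) / (((n : ℝ) ^ 2 + r ^ 2) ^ 2)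

noncomputable def Afun (r x : ℝ) : ℝ :=
  1 / (x ^ 2 + r ^ 2) + x / ((x ^ 2 + r ^ 2) ^ 2) +
    (3 * x ^ 2 - r ^ 2) / (6 * (x ^ 2 + r ^ 2) ^ 3)

noncomputable def Bfun (r x : ℝ) : ℝ :=
  (5 * x ^ 4 + 15 * x ^ 2 * r ^ 2 + 6 * r ^ 4) / (16 * (x ^ 2 + r ^ 2) ^ 5)

noncomputable def Tfun (r : ℝ) (m : ℕ) : ℝ := ∑' n : ℕ, gfun r (n + m)

noncomputable def Efun (r : ℝ) (m : ℕ) : ℝ := Tfun r m - Afun r (m : ℝ)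

noncomputable def Pone (t s : ℝ) : ℝ :=
  19728 + 67356*s + 72810*s^2 + 39078*s^3 + 13464*s^4 + 2691*s^5 + 207*s^6 + 179904*t + 487524*t*s + 417288*t*s^2 + 173688*t*s^3 + 42060*t*s^4 + 4908*t*s^5 + 138*t*s^6 + 753192*t^2 + 1601055*t^2*s + 1068237*t^2*s^2 + 334206*t^2*s^3 + 53685*t^2*s^4 + 3114*t^2*s^5 + 1917336*t^3 + 3151970*t^3*s + 1603304*t^3*s^2 + 360300*t^3*s^3 + 34820*t^3*s^4 + 692*t^3*s^5 + 3311865*t^4 + 4136700*t^4*s + 1555194*t^4*s^2 + 234870*t^4*s^3 + 11445*t^4*s^4 + 4100082*t^5 + 3803224*t^5*s + 1011340*t^5*s^2 + 92552*t^5*s^3 + 1526*t^5*s^4 + 3743541*t^6 + 2501226*t^6*s + 441042*t^6*s^2 + 20412*t^6*s^3 + 2552808*t^7 + 1177380*t^7*s + 124408*t^7*s^2 + 1944*t^7*s^3 + 1300374*t^8 + 388935*t^8*s + 20601*t^8*s^2 + 488760*t^9 + 85900*t^9*s + 1526*t^9*s^2 + 131769*t^10 + 11418*t^10*s + 24132*t^11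 + 692*t^11*s + 2691*t^12 + 138*t^13

noncomputable def Ptwo (t s : ℝ) : ℝ :=
  10512 + 60444*s + 91818*s^2 + 60822*s^3 + 18216*s^4 + 2259*s^5 + 63*s^6 + 90816*t + 436836*t*s + 537672*t*s^2 + 271992*t*s^3 + 57900*t*s^4 + 4332*t*s^5 + 42*t*s^6 + 359208*t^2 + 1434015*t^2*s + 1403613*t^2*s^2 + 526014*t^2*s^3 + 74565*t^2*s^4 + 2826*t^2*s^5 + 862104*t^3 + 2824930*t^3*s + 2143336*t^3*s^2 + 569580*t^3*s^3 + 48580*t^3*s^4 + 628*t^3*s^5 + 1402425*t^4 + 3713100*t^4*s + 2109786*t^4*s^2 + 372630*t^4*s^3 + 16005*t^4*s^4 + 1635378*t^5 + 3421016*t^5*s + 1388492*t^5*s^2 + 147208*t^5*s^3 + 2134*t^5*s^4 + 1408869*t^6 + 2255274*t^6*s + 611058*t^6*s^2 + 32508*t^6*s^3 + 909672*t^7 + 1064100*t^7*s + 173432*t^7*s^2 + 3096*t^7*s^3 + 441126*t^8 + 352215*t^8*s + 28809*t^8*s^2 + 159000*t^9 + 77900*t^9*s + 2134*t^9*s^2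 + 41481*t^10 + 10362*t^10*s + 7428*t^11 + 628*t^11*s + 819*t^12 + 42*t^13

lemma Pone_nonneg (t s : ℝ) (ht : 0 ≤ t) (hs : 0 ≤ s) : 0 ≤ Pone t s := by
  unfold Pone
  linarith [mul_nonneg (pow_nonneg ht 0) (pow_nonneg hs 0), mul_nonneg (pow_nonneg ht 0) (pow_nonneg hs 1), mul_nonneg (pow_nonneg ht 0) (pow_nonneg hs 2), mul_nonneg (pow_nonneg ht 0) (pow_nonneg hs 3), mul_nonneg (pow_nonneg ht 0) (pow_nonneg hs 4), mul_nonneg (pow_nonneg ht 0) (pow_nonneg hs 5), mul_nonneg (pow_nonneg ht 0) (pow_nonneg hs 6), mul_nonneg (pow_nonneg ht 1) (pow_nonneg hs 0), mul_nonneg (pow_nonneg ht 1) (pow_nonneg hs 1), mul_nonneg (pow_nonneg ht 1) (pow_nonneg hs 2), mul_nonneg (pow_nonneg ht 1) (pow_nonneg hs 3), mul_nonneg (pow_nonneg ht 1) (pow_nonneg hs 4), mul_nonneg (pow_nonneg ht 1) (pow_nonneg hs 5), mul_nonneg (pow_nonneg ht 1) (pow_nonneg hs 6), mul_nonneg (pow_nonneg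 ht 2) (pow_nonneg hs 0), mul_nonneg (pow_nonneg ht 2) (pow_nonneg hs 1), mul_nonneg (pow_nonneg ht 2) (pow_nonneg hs 2), mul_nonneg (pow_nonneg ht 2) (pow_nonneg hs 3), mul_nonneg (pow_nonneg ht 2) (pow_nonneg hs 4), mul_nonneg (pow_nonneg ht 2) (pow_nonneg hs 5), mul_nonneg (pow_nonneg ht 3) (pow_nonneg hs 0), mul_nonneg (pow_nonneg ht 3) (pow_nonneg hs 1), mul_nonneg (pow_nonneg ht 3) (pow_nonneg hs 2), mul_nonneg (pow_nonneg ht 3) (pow_nonneg hs 3), mul_nonneg (pow_nonneg ht 3) (pow_nonneg hs 4), mul_nonneg (pow_nonneg ht 3) (pow_nonneg hs 5), mul_nonneg (pow_nonneg ht 4) (pow_nonneg hs 0), mul_nonneg (pow_nonneg ht 4) (pow_nonneg hs 1), mul_nonneg (pow_nonneg ht 4) (pow_nonneg hs 2), mul_nonneg (pow_nonneg ht 4) (pow_nonneg hs 3), mul_nonneg (pow_nonneg ht 4) (pow_nonneg hs 4), mul_nonneg (pow_nonneg ht 5) (pow_nonneg hs 0), mul_nonneg (pow_nonneg ht 5)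 (pow_nonneg hs 1), mul_nonneg (pow_nonneg ht 5) (pow_nonneg hs 2), mul_nonneg (pow_nonneg ht 5) (pow_nonneg hs 3), mul_nonneg (pow_nonneg ht 5) (pow_nonneg hs 4), mul_nonneg (pow_nonneg ht 6) (pow_nonneg hs 0), mul_nonneg (pow_nonneg ht 6) (pow_nonneg hs 1), mul_nonneg (pow_nonneg ht 6) (pow_nonneg hs 2), mul_nonneg (pow_nonneg ht 6) (pow_nonneg hs 3), mul_nonneg (pow_nonneg ht 7) (pow_nonneg hs 0), mul_nonneg (pow_nonneg ht 7) (pow_nonneg hs 1), mul_nonneg (pow_nonneg ht 7) (pow_nonneg hs 2), mul_nonneg (pow_nonneg ht 7) (pow_nonneg hs 3), mul_nonneg (pow_nonneg ht 8) (pow_nonneg hs 0), mul_nonneg (pow_nonneg ht 8) (pow_nonneg hs 1), mul_nonneg (pow_nonneg ht 8) (pow_nonneg hs 2), mul_nonneg (pow_nonneg ht 9) (pow_nonneg hs 0), mul_nonneg (pow_nonneg ht 9) (pow_nonneg hs 1), mul_nonneg (pow_nonneg ht 9) (pow_nonneg hs 2), mul_nonneg (pow_nonneg ht 10) (pow_nonneg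 hs 0), mul_nonneg (pow_nonneg ht 10) (pow_nonneg hs 1), mul_nonneg (pow_nonneg ht 11) (pow_nonneg hs 0), mul_nonneg (pow_nonneg ht 11) (pow_nonneg hs 1), mul_nonneg (pow_nonneg ht 12) (pow_nonneg hs 0), mul_nonneg (pow_nonneg ht 13) (pow_nonneg hs 0)]

lemma Ptwo_nonneg (t s : ℝ) (ht : 0 ≤ t) (hs : 0 ≤ s) : 0 ≤ Ptwo t s := by
  unfold Ptwo
  linarith [mul_nonneg (pow_nonneg ht 0) (pow_nonneg hs 0), mul_nonneg (pow_nonneg ht 0) (pow_nonneg hs 1), mul_nonneg (pow_nonneg ht 0) (pow_nonneg hs 2), mul_nonneg (pow_nonneg ht 0) (pow_nonneg hs 3), mul_nonneg (pow_nonneg ht 0) (pow_nonneg hs 4), mul_nonneg (pow_nonneg ht 0) (pow_nonneg hs 5), mul_nonneg (pow_nonneg ht 0) (pow_nonneg hs 6), mul_nonneg (pow_nonneg ht 1) (pow_nonneg hs 0), mul_nonneg (pow_nonneg ht 1) (pow_nonneg hs 1), mul_nonneg (pow_nonneg ht 1) (pow_nonneg hs 2), mul_nonneg (pow_nonneg ht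 1) (pow_nonneg hs 3), mul_nonneg (pow_nonneg ht 1) (pow_nonneg hs 4), mul_nonneg (pow_nonneg ht 1) (pow_nonneg hs 5), mul_nonneg (pow_nonneg ht 1) (pow_nonneg hs 6), mul_nonneg (pow_nonneg ht 2) (pow_nonneg hs 0), mul_nonneg (pow_nonneg ht 2) (pow_nonneg hs 1), mul_nonneg (pow_nonneg ht 2) (pow_nonneg hs 2), mul_nonneg (pow_nonneg ht 2) (pow_nonneg hs 3), mul_nonneg (pow_nonneg ht 2) (pow_nonneg hs 4), mul_nonneg (pow_nonneg ht 2) (pow_nonneg hs 5), mul_nonneg (pow_nonneg ht 3) (pow_nonneg hs 0), mul_nonneg (pow_nonneg ht 3) (pow_nonneg hs 1), mul_nonneg (pow_nonneg ht 3) (pow_nonneg hs 2), mul_nonneg (pow_nonneg ht 3) (pow_nonneg hs 3), mul_nonneg (pow_nonneg ht 3) (pow_nonneg hs 4), mul_nonneg (pow_nonneg ht 3) (pow_nonneg hs 5), mul_nonneg (pow_nonneg ht 4) (pow_nonneg hs 0), mul_nonneg (pow_nonneg ht 4) (pow_nonneg hs 1), mul_nonneg (pow_nonneg ht 4) (pow_nonneg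 hs 2), mul_nonneg (pow_nonneg ht 4) (pow_nonneg hs 3), mul_nonneg (pow_nonneg ht 4) (pow_nonneg hs 4), mul_nonneg (pow_nonneg ht 5) (pow_nonneg hs 0), mul_nonneg (pow_nonneg ht 5) (pow_nonneg hs 1), mul_nonneg (pow_nonneg ht 5) (pow_nonneg hs 2), mul_nonneg (pow_nonneg ht 5) (pow_nonneg hs 3), mul_nonneg (pow_nonneg ht 5) (pow_nonneg hs 4), mul_nonneg (pow_nonneg ht 6) (pow_nonneg hs 0), mul_nonneg (pow_nonneg ht 6) (pow_nonneg hs 1), mul_nonneg (pow_nonneg ht 6) (pow_nonneg hs 2), mul_nonneg (pow_nonneg ht 6) (pow_nonneg hs 3), mul_nonneg (pow_nonneg ht 7) (pow_nonneg hs 0), mul_nonneg (pow_nonneg ht 7) (pow_nonneg hs 1), mul_nonneg (pow_nonneg ht 7) (pow_nonneg hs 2), mul_nonneg (pow_nonneg ht 7) (pow_nonneg hs 3), mul_nonneg (pow_nonneg ht 8) (pow_nonneg hs 0), mul_nonneg (pow_nonneg ht 8) (pow_nonneg hs 1), mul_nonneg (pow_nonneg ht 8) (pow_nonneg hs 2),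 mul_nonneg (pow_nonneg ht 9) (pow_nonneg hs 0), mul_nonneg (pow_nonneg ht 9) (pow_nonneg hs 1), mul_nonneg (pow_nonneg ht 9) (pow_nonneg hs 2), mul_nonneg (pow_nonneg ht 10) (pow_nonneg hs 0), mul_nonneg (pow_nonneg ht 10) (pow_nonneg hs 1), mul_nonneg (pow_nonneg ht 11) (pow_nonneg hs 0), mul_nonneg (pow_nonneg ht 11) (pow_nonneg hs 1), mul_nonneg (pow_nonneg ht 12) (pow_nonneg hs 0), mul_nonneg (pow_nonneg ht 13) (pow_nonneg hs 0)]

lemma step_bound (r x : ℝ) (hr : 0 < r) (hx : 1 ≤ x) :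
    |2 * x / ((x ^ 2 + r ^ 2) ^ 2) + Afun r (x + 1) - Afun r x| ≤
      Bfun r x - Bfun r (x + 1) := by
  have hu : (0:ℝ) < x ^ 2 + r ^ 2 := by positivity
  have hv : (0:ℝ) < (x + 1) ^ 2 + r ^ 2 := by positivity
  have ht : 0 ≤ x - 1 := by linarith
  have hs : 0 ≤ r ^ 2 := sq_nonneg r
  have hP1 := Pone_nonneg (x - 1) (r ^ 2) ht hs
  have hP2 := Ptwo_nonneg (x - 1) (r ^ 2) ht hs
  have hM : 2 * x / ((x ^ 2 + r ^ 2) ^ 2) + Afun r (x + 1) - Afun r x =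
      (12 * x * (x ^ 2 + r ^ 2) * ((x + 1) ^ 2 + r ^ 2) ^ 3
      + (x ^ 2 + r ^ 2) ^ 3 * (6 * ((x + 1) ^ 2 + r ^ 2) ^ 2 + 6 * (x + 1) * ((x + 1) ^ 2 + r ^ 2) + (3 * (x + 1) ^ 2 - r ^ 2))
      - ((x + 1) ^ 2 + r ^ 2) ^ 3 * (6 * (x ^ 2 + r ^ 2) ^ 2 + 6 * x * (x ^ 2 + r ^ 2) + (3 * x ^ 2 - r ^ 2)))
      / (6 * (x ^ 2 + r ^ 2) ^ 3 * ((x + 1) ^ 2 + r ^ 2) ^ 3) := by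
    unfold Afun
    rw [div_add_div _ _ (by positivity) (by positivity)]
    field_simp
    ring
  have hB : Bfun r x - Bfun r (x + 1) =
      ((5 * x ^ 4 + 15 * x ^ 2 * r ^ 2 + 6 * r ^ 4) * ((x + 1) ^ 2 + r ^ 2) ^ 5
      - (5 * (x + 1) ^ 4 + 15 * (x + 1) ^ 2 * r ^ 2 + 6 * r ^ 4) * (x ^ 2 + r ^ 2) ^ 5)
      / (16 * (x ^ 2 + r ^ 2) ^ 5 * ((x + 1) ^ 2 + r ^ 2) ^ 5) := by
    unfold Bfun
    rw [div_sub_div _ _ (by positivity) (by positivity),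
      div_eq_div_iff (by positivity) (by positivity)]
    ring
  have hid1 : ((5 * x ^ 4 + 15 * x ^ 2 * r ^ 2 + 6 * r ^ 4) * ((x + 1) ^ 2 + r ^ 2) ^ 5
      - (5 * (x + 1) ^ 4 + 15 * (x + 1) ^ 2 * r ^ 2 + 6 * r ^ 4) * (x ^ 2 + r ^ 2) ^ 5) * (6 * (x ^ 2 + r ^ 2) ^ 3 * ((x + 1) ^ 2 + r ^ 2) ^ 3)
      - (12 * x * (x ^ 2 + r ^ 2) * ((x + 1) ^ 2 + r ^ 2) ^ 3
      + (x ^ 2 + r ^ 2) ^ 3 * (6 * ((x + 1) ^ 2 + r ^ 2) ^ 2 + 6 * (x + 1) * ((x + 1) ^ 2 + r ^ 2) + (3 * (x + 1) ^ 2 - r ^ 2))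
      - ((x + 1) ^ 2 + r ^ 2) ^ 3 * (6 * (x ^ 2 + r ^ 2) ^ 2 + 6 * x * (x ^ 2 + r ^ 2) + (3 * x ^ 2 - r ^ 2))) * (16 * (x ^ 2 + r ^ 2) ^ 5 * ((x + 1) ^ 2 + r ^ 2) ^ 5)
      = 2 * ((x ^ 2 + r ^ 2) ^ 3 * ((x + 1) ^ 2 + r ^ 2) ^ 3) * Pone (x - 1) (r ^ 2) := by
    unfold Pone
    ring
  have hid2 : ((5 * x ^ 4 + 15 * x ^ 2 * r ^ 2 + 6 * r ^ 4) * ((x + 1) ^ 2 + r ^ 2) ^ 5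
      - (5 * (x + 1) ^ 4 + 15 * (x + 1) ^ 2 * r ^ 2 + 6 * r ^ 4) * (x ^ 2 + r ^ 2) ^ 5) * (6 * (x ^ 2 + r ^ 2) ^ 3 * ((x + 1) ^ 2 + r ^ 2) ^ 3)
      + (12 * x * (x ^ 2 + r ^ 2) * ((x + 1) ^ 2 + r ^ 2) ^ 3
      + (x ^ 2 + r ^ 2) ^ 3 * (6 * ((x + 1) ^ 2 + r ^ 2) ^ 2 + 6 * (x + 1) * ((x + 1) ^ 2 + r ^ 2) + (3 * (x + 1) ^ 2 - r ^ 2))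
      - ((x + 1) ^ 2 + r ^ 2) ^ 3 * (6 * (x ^ 2 + r ^ 2) ^ 2 + 6 * x * (x ^ 2 + r ^ 2) + (3 * x ^ 2 - r ^ 2))) * (16 * (x ^ 2 + r ^ 2) ^ 5 * ((x + 1) ^ 2 + r ^ 2) ^ 5)
      = 2 * ((x ^ 2 + r ^ 2) ^ 3 * ((x + 1) ^ 2 + r ^ 2) ^ 3) * Ptwo (x - 1) (r ^ 2) := by
    unfold Ptwo
    ring
  have hpos1 : 0 ≤ 2 * ((x ^ 2 + r ^ 2) ^ 3 * ((x + 1) ^ 2 + r ^ 2) ^ 3) * Pone (x - 1) (r ^ 2) :=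
    mul_nonneg (by positivity) hP1
  have hpos2 : 0 ≤ 2 * ((x ^ 2 + r ^ 2) ^ 3 * ((x + 1) ^ 2 + r ^ 2) ^ 3) * Ptwo (x - 1) (r ^ 2) :=
    mul_nonneg (by positivity) hP2
  rw [abs_le]
  constructor
  · rw [hM, hB, neg_le, ← neg_div, div_le_div_iff₀ (by positivity) (by positivity)]
    linarith [hpos2, hid2]
  · rw [hM, hB, div_le_div_iff₀ (by positivity) (by positivity)]
    linarith [hpos1, hid1]

lemma summable_gfun (r : ℝ) (hr : 0 < r) : Summable (gfun r) := by
  have hb : Summable (fun n : ℕ => 2 * (1 / (n:ℝ) ^ 3)) :=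
    (Real.summable_one_div_nat_pow.mpr (by norm_num)).mul_left 2
  apply Summable.of_nonneg_of_le (fun n => by unfold gfun; positivity) _ hb
  intro n
  rcases Nat.eq_zero_or_pos n with h | h
  · subst h; simp [gfun]
  · have hn : (1:ℝ) ≤ (n:ℝ) := by exact_mod_cast h
    unfold gfun
    rw [mul_one_div, div_le_div_iff₀ (by positivity) (by positivity)]
    nlinarith [sq_nonneg r, sq_nonneg ((n:ℝ) * r), sq_nonneg ((n:ℝ)^2 - 1)]

lemma summable_shift (r : ℝ) (hr : 0 < r) (m : ℕ) : Summable (fun n : ℕ => gfun r (n + m)) :=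
  (summable_gfun r hr).comp_injective (add_left_injective m)

lemma T_succ (r : ℝ) (hr : 0 < r) (m : ℕ) : Tfun r m = gfun r m + Tfun r (m + 1) := by
  have h := Summable.tsum_eq_zero_add (summable_shift r hr m)
  unfold Tfun
  rw [h]
  simp only [Nat.zero_add]
  congr 1
  apply tsum_congr
  intro n
  congr 1
  omega

lemma S_split (r : ℝ) (hr : 0 < r) (m : ℕ) (hm : 1 ≤ m) :
    S r = (∑ n ∈ Finset.Ico 1 m, gfun r n) + Tfun r m := by
  have hs1 : Summable (fun n : ℕ => gfun r (n + 1)) := summable_shift r hr 1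
  have h0 : S r = ∑' n : ℕ, gfun r (n + 1) := by
    apply tsum_congr
    intro n
    unfold gfun
    push_cast
    ring
  rw [h0, ← Summable.sum_add_tsum_nat_add (m - 1) hs1]
  congr 1
  · rw [Finset.sum_Ico_eq_sum_range]
    exact Finset.sum_congr rfl fun i _ => by rw [add_comm]
  · unfold Tfun
    apply tsum_congr
    intro n
    congr 1
    omega

lemma A_bound (r x : ℝ) (hr : 0 < r) (hx : 1 ≤ x) : |Afun r x| ≤ 3 / x ^ 2 := by
  have hu : (0:ℝ) < x ^ 2 + r ^ 2 := by positivity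
  have hx2 : (0:ℝ) < x ^ 2 := by positivity
  have h1 : 1 / (x ^ 2 + r ^ 2) ≤ 1 / x ^ 2 := by
    rw [div_le_div_iff₀ hu hx2]; nlinarith [sq_nonneg r]
  have h2 : x / ((x ^ 2 + r ^ 2) ^ 2) ≤ 1 / x ^ 2 := by
    rw [div_le_div_iff₀ (by positivity) hx2]
    nlinarith [sq_nonneg r, sq_nonneg (x * r), sq_nonneg (x ^ 2 - x)]
  have h3 : (3 * x ^ 2 - r ^ 2) / (6 * (x ^ 2 + r ^ 2) ^ 3) ≤ 1 / x ^ 2 := by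
    rw [div_le_div_iff₀ (by positivity) hx2]
    nlinarith [sq_nonneg r, sq_nonneg (x * r), sq_nonneg (x ^ 2 - x), sq_nonneg (r ^ 2 * x),
      mul_nonneg (mul_nonneg (sq_nonneg x) (sq_nonneg x)) (sq_nonneg r),
      mul_nonneg (mul_nonneg (sq_nonneg r) (sq_nonneg r)) (sq_nonneg r),
      mul_nonneg (mul_nonneg (sq_nonneg x) (sq_nonneg r)) (sq_nonneg r)]
  have h4 : 0 ≤ 1 / (x ^ 2 + r ^ 2) := by positivity
  have h5 : 0 ≤ x / ((x ^ 2 + r ^ 2) ^ 2) := by positivity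
  have hu1 : (1:ℝ) ≤ x ^ 2 + r ^ 2 := by nlinarith [sq_nonneg r]
  have h6 : -(1 / x ^ 2) ≤ (3 * x ^ 2 - r ^ 2) / (6 * (x ^ 2 + r ^ 2) ^ 3) := by
    rw [neg_le, ← neg_div, div_le_div_iff₀ (by positivity) hx2]
    nlinarith [sq_nonneg (x ^ 2 - r ^ 2),
      mul_nonneg (mul_nonneg hu.le hu.le) (by linarith : (0:ℝ) ≤ x ^ 2 + r ^ 2 - 1),
      sq_nonneg x, sq_nonneg r, sq_nonneg (x * r)]
  have h7 : (0:ℝ) < 1 / x ^ 2 := by positivity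
  have h8 : 3 / x ^ 2 = 1 / x ^ 2 + 1 / x ^ 2 + 1 / x ^ 2 := by ring
  unfold Afun
  rw [abs_le, h8]
  constructor <;> linarith

lemma A_tendsto (r : ℝ) (hr : 0 < r) :
    Tendsto (fun m : ℕ => Afun r (m : ℝ)) atTop (𝓝 0) := by
  have hpow : Tendsto (fun m : ℕ => ((m:ℝ)) ^ 2) atTop atTop :=
    (tendsto_pow_atTop (by norm_num)).comp tendsto_natCast_atTop_atTop
  have hdiv : Tendsto (fun m : ℕ => 3 / ((m:ℝ)) ^ 2) atTop (𝓝 0) :=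
    Tendsto.div_atTop tendsto_const_nhds hpow
  apply squeeze_zero_norm' _ hdiv
  filter_upwards [eventually_ge_atTop 1] with m hm
  have h1 : (1:ℝ) ≤ (m:ℝ) := by exact_mod_cast hm
  exact A_bound r (m : ℝ) hr h1

lemma E_tendsto (r : ℝ) (hr : 0 < r) : Tendsto (fun m : ℕ => Efun r m) atTop (𝓝 0) := by
  have hT : Tendsto (fun m : ℕ => Tfun r m) atTop (𝓝 0) := tendsto_sum_nat_add (gfun r)
  have := hT.sub (A_tendsto r hr)
  simpa [Efun] using this

lemma key_ind (r : ℝ) (hr : 0 < r) (m : ℕ) (hm : 1 ≤ m) :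
    ∀ N : ℕ, |Efun r m| ≤ Bfun r (m : ℝ) - Bfun r ((m + N : ℕ) : ℝ) + |Efun r (m + N)| := by
  intro N
  induction N with
  | zero => simp
  | succ N ih =>
    set k := m + N with hk
    have hk1 : 1 ≤ k := le_trans hm (Nat.le_add_right m N)
    have hx : (1:ℝ) ≤ (k:ℝ) := by exact_mod_cast hk1
    have hstep := step_bound r (k : ℝ) hr hx
    have hcast : ((k + 1 : ℕ) : ℝ) = (k : ℝ) + 1 := by push_cast; ring
    have hE : Efun r k = (2 * (k:ℝ) / (((k:ℝ)) ^ 2 + r ^ 2) ^ 2 + Afun r ((k:ℝ) + 1) - Afun r (k:ℝ))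
        + Efun r (k + 1) := by
      unfold Efun
      rw [T_succ r hr k, hcast]
      unfold gfun
      ring
    have habs : |Efun r k| ≤ (Bfun r (k:ℝ) - Bfun r ((k:ℝ) + 1)) + |Efun r (k + 1)| := by
      rw [hE]
      calc |(2 * (k:ℝ) / (((k:ℝ)) ^ 2 + r ^ 2) ^ 2 + Afun r ((k:ℝ) + 1) - Afun r (k:ℝ))
            + Efun r (k + 1)| ≤
          |2 * (k:ℝ) / (((k:ℝ)) ^ 2 + r ^ 2) ^ 2 + Afun r ((k:ℝ) + 1) - Afun r (k:ℝ)| +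
            |Efun r (k + 1)| := abs_add_le _ _
        _ ≤ (Bfun r (k:ℝ) - Bfun r ((k:ℝ) + 1)) + |Efun r (k + 1)| := by linarith
    have hmN1 : m + (N + 1) = k + 1 := by omega
    rw [hmN1, hcast]
    linarith [ih, habs]

lemma E_le_B (r : ℝ) (hr : 0 < r) (m : ℕ) (hm : 1 ≤ m) : |Efun r m| ≤ Bfun r (m : ℝ) := by
  have hlim : Tendsto (fun N : ℕ => Bfun r (m : ℝ) + |Efun r (m + N)|) atTop
      (𝓝 (Bfun r (m : ℝ) + 0)) := by
    apply Tendsto.const_add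
    have hE := E_tendsto r hr
    have hshift : Tendsto (fun N : ℕ => m + N) atTop atTop :=
      tendsto_atTop_mono (fun N => Nat.le_add_left N m) tendsto_id
    have h := (hE.comp hshift).abs
    simpa [Function.comp] using h
  have hbd : ∀ N : ℕ, |Efun r m| ≤ Bfun r (m : ℝ) + |Efun r (m + N)| := by
    intro N
    have h := key_ind r hr m hm N
    have hB : 0 ≤ Bfun r ((m + N : ℕ) : ℝ) := by unfold Bfun; positivity
    linarith
  have h := ge_of_tendsto' hlim hbd
  linarith [h]

theorem stmt_17 (r : ℝ) (hr : 0 < r) (m : ℕ) (hm : 1 ≤ m) :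
    |S r - ((∑ n ∈ Finset.Ico 1 m, (2 * (n : ℝ)) / (((n : ℝ) ^ 2 + r ^ 2) ^ 2))
        + 1 / ((m : ℝ) ^ 2 + r ^ 2) + (m : ℝ) / (((m : ℝ) ^ 2 + r ^ 2) ^ 2)
        + (3 * (m : ℝ) ^ 2 - r ^ 2) / (6 * ((m : ℝ) ^ 2 + r ^ 2) ^ 3))|
      ≤ (5 * (m : ℝ) ^ 4 + 15 * (m : ℝ) ^ 2 * r ^ 2 + 6 * r ^ 4) /
          (16 * ((m : ℝ) ^ 2 + r ^ 2) ^ 5) := by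
  have h1 : S r - ((∑ n ∈ Finset.Ico 1 m, (2 * (n : ℝ)) / (((n : ℝ) ^ 2 + r ^ 2) ^ 2))
        + 1 / ((m : ℝ) ^ 2 + r ^ 2) + (m : ℝ) / (((m : ℝ) ^ 2 + r ^ 2) ^ 2)
        + (3 * (m : ℝ) ^ 2 - r ^ 2) / (6 * ((m : ℝ) ^ 2 + r ^ 2) ^ 3)) = Efun r m := by
    rw [S_split r hr m hm]
    unfold Efun Afun gfun
    ring
  rw [h1]
  have h2 := E_le_B r hr m hm
  unfold Bfun at h2
  exact h2
end
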